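/- The function x ↦ (1+x)^(1+1/x) is monotone increasing for x > 0. -/

import Mathlib

/-- The function x ↦ (1+x)^(1+1/x) is monotone increasing for x > 0. -/
theorem monotone_one_add_rpow :
    MonotoneOn (fun x : ℝ => (1 + x) ^ ((1 : ℝ) + 1 / x)) (Set.Ioi (0 : ℝ)) := by
  have hderiv : ∀ x : ℝ, 0 < x → HasDerivAt (fun x : ℝ => (1 + 1 / x) * Real.log (1 + x))
      (-(x^2)⁻¹ * Real.log (1 + x) + (1 + 1 / x) * (1 / (1 + x))) x := by
    intro x hx
    have hx1 : (0:ℝ) < 1 + x := by linarith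
    have h1 : HasDerivAt (fun x : ℝ => 1 + 1 / x) (-(x^2)⁻¹) x := by
      simpa using (hasDerivAt_inv (ne_of_gt hx)).const_add 1
    have h2 : HasDerivAt (fun x : ℝ => Real.log (1 + x)) (1 / (1 + x)) x := by
      have := (Real.hasDerivAt_log (ne_of_gt hx1)).comp x
        ((hasDerivAt_id x).const_add 1)
      simpa [one_div, Function.comp_def] using this
    exact h1.mul h2
  have key : MonotoneOn (fun x : ℝ => (1 + 1 / x) * Real.log (1 + x)) (Set.Ioi 0) := by
    apply monotoneOn_of_deriv_nonneg (convex_Ioi 0)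
    · apply ContinuousOn.mul
      · exact continuousOn_const.add (continuousOn_const.div continuousOn_id
          (fun x hx => ne_of_gt hx))
      · exact Real.continuousOn_log.comp (continuousOn_const.add continuousOn_id)
          (fun x hx => by simp at hx ⊢; linarith)
    · intro x hx
      rw [interior_Ioi] at hx
      exact (hderiv x hx).differentiableAt.differentiableWithinAt
    · intro x hx
      rw [interior_Ioi] at hx
      simp only [Set.mem_Ioi] at hx
      have hx1 : (0:ℝ) < 1 + x := by linarith
      rw [(hderiv x hx).deriv]
      have hlog : Real.log (1 + x) ≤ x := by
        have := Real.log_le_sub_one_of_pos hx1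
        linarith
      have heq : (1 + 1 / x) * (1 / (1 + x)) = 1 / x := by
        field_simp; ring
      rw [heq]
      have h3 : -(x^2)⁻¹ * x ≤ -(x^2)⁻¹ * Real.log (1 + x) := by
        apply mul_le_mul_of_nonpos_left hlog
        rw [neg_nonpos]
        positivity
      have h4 : -(x^2)⁻¹ * x = -(1 / x) := by
        field_simp
      rw [h4] at h3
      linarith
  intro x hx y hy hxy
  simp only [Set.mem_Ioi] at hx hy
  show (1 + x) ^ ((1:ℝ) + 1 / x) ≤ (1 + y) ^ ((1:ℝ) + 1 / y)
  rw [Real.rpow_def_of_pos (by linarith), Real.rpow_def_of_pos (by linarith)]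
  apply Real.exp_le_exp.2
  have h := key hx hy hxy
  simp only at h
  nlinarith [h]
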